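/- (Classification of the smooth case: only the Chen–Teo instantons.) Let p, q be real numbers with −1 < p < 1, −1 < q < 1, p + q > 0, and let a, b be positive real numbers satisfying the sign conditions: a > 1 if p > 0, a < 1 if p < 0, a = 1 if p = 0, and similarly b > 1 if q > 0, b < 1 if q < 0, b = 1 if q = 0. Suppose there exist integers ℓ_1, ℓ_2 such that ℓ_1·p + q = 1, p + ℓ_2·q = 1, p + q − a·(1 − p) = 0, and p + q − b·(1 − q) = 0. Then ℓ_1 = ℓ_2 = 1, p + q = 1, 0 < p < 1, 0 < q < 1, a = 1/q, and b = 1/p; in particular the normalized total NUT-charge n = (p+q)·(p+q − a·q·(1−p) − b·p·(1−q)) / (a·b·p·q·(1−p)·(1−q)) equals 0. -/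

import Mathlib

theorem statement17 (p q a b : ℝ)
    (hp : -1 < p) (hp1 : p < 1) (hq : -1 < q) (hq1 : q < 1)
    (hpq : 0 < p + q)
    (ha : 0 < a) (hb : 0 < b)
    (hap : 0 < p → 1 < a) (han : p < 0 → a < 1) (ha0 : p = 0 → a = 1)
    (hbq : 0 < q → 1 < b) (hbn : q < 0 → b < 1) (hb0 : q = 0 → b = 1)
    (ℓ₁ ℓ₂ : ℤ)
    (e1 : (ℓ₁ : ℝ) * p + q = 1) (e2 : p + (ℓ₂ : ℝ) * q = 1)
    (e3 : p + q - a * (1 - p) = 0) (e4 : p + q - b * (1 - q) = 0) :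
    ℓ₁ = 1 ∧ ℓ₂ = 1 ∧ p + q = 1 ∧ 0 < p ∧ p < 1 ∧ 0 < q ∧ q < 1 ∧
      a = 1 / q ∧ b = 1 / p ∧
      (p + q) * (p + q - a * q * (1 - p) - b * p * (1 - q)) /
        (a * b * p * q * (1 - p) * (1 - q)) = 0 := by
  -- First, p > 0
  have hp0 : 0 < p := by
    rcases lt_trichotomy p 0 with h | h | h
    · have hq0 : 0 < q := by nlinarith
      have hbgt : 1 < b := hbq hq0
      have h1 : 1 - q < p + q := by nlinarith
      have h2 : 1 < (ℓ₂ : ℝ) * q := by nlinarith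
      have h3 : 1 < (ℓ₂ : ℝ) := by nlinarith
      have h4 : (2 : ℤ) ≤ ℓ₂ := by exact_mod_cast (by exact_mod_cast h3 : (1:ℤ) < ℓ₂)
      have h5 : (2 : ℝ) ≤ (ℓ₂ : ℝ) := by exact_mod_cast h4
      nlinarith
    · have := ha0 h
      rw [h, this] at e3
      linarith
    · exact h
  have hq0 : 0 < q := by
    rcases lt_trichotomy q 0 with h | h | h
    · have hagt : 1 < a := hap hp0
      have h1 : 1 - p < p + q := by nlinarith
      have h2 : 1 < (ℓ₁ : ℝ) * p := by nlinarith
      have h3 : 1 < (ℓ₁ : ℝ) := by nlinarith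
      have h4 : (2 : ℤ) ≤ ℓ₁ := by exact_mod_cast (by exact_mod_cast h3 : (1:ℤ) < ℓ₁)
      have h5 : (2 : ℝ) ≤ (ℓ₁ : ℝ) := by exact_mod_cast h4
      nlinarith
    · have := hb0 h
      rw [h, this] at e4
      linarith
    · exact h
  have hagt : 1 < a := hap hp0
  have hbgt : 1 < b := hbq hq0
  have ha1 : 1 - p < p + q := by nlinarith
  have hb1 : 1 - q < p + q := by nlinarith
  have hl1 : ℓ₁ = 1 := by
    have h2 : 0 < (ℓ₁ : ℝ) * p := by nlinarith
    have h3 : (0 : ℝ) < (ℓ₁ : ℝ) := by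
      by_contra hc; push_neg at hc; nlinarith
    have h4 : (ℓ₁ : ℝ) < 2 := by
      by_contra hc; push_neg at hc; nlinarith
    have h5 : (0 : ℤ) < ℓ₁ := by exact_mod_cast h3
    have h6 : ℓ₁ < 2 := by exact_mod_cast h4
    omega
  have hl2 : ℓ₂ = 1 := by
    have h2 : 0 < (ℓ₂ : ℝ) * q := by nlinarith
    have h3 : (0 : ℝ) < (ℓ₂ : ℝ) := by
      by_contra hc; push_neg at hc; nlinarith
    have h4 : (ℓ₂ : ℝ) < 2 := by
      by_contra hc; push_neg at hc; nlinarith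
    have h5 : (0 : ℤ) < ℓ₂ := by exact_mod_cast h3
    have h6 : ℓ₂ < 2 := by exact_mod_cast h4
    omega
  rw [hl1] at e1
  have hsum : p + q = 1 := by push_cast at e1; linarith
  have h1p : 1 - p = q := by linarith
  have h1q : 1 - q = p := by linarith
  have haq : a = 1 / q := by
    have hq' : q ≠ 0 := ne_of_gt hq0
    rw [h1p] at e3
    field_simp
    linarith
  have hbp : b = 1 / p := by
    have hp' : p ≠ 0 := ne_of_gt hp0
    rw [h1q] at e4
    field_simp
    linarith
  refine ⟨hl1, hl2, hsum, hp0, hp1, hq0, hq1, haq, hbp, ?_⟩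
  have hnum : p + q - a * q * (1 - p) - b * p * (1 - q) = 0 := by
    rw [haq, hbp]
    rw [h1p, h1q]
    field_simp
    ring
  rw [hnum]
  simp
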